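/- Let a, b : Primes → ℝ be functions on the prime numbers such that |a_p − b_p| ≤ 4 for every prime p, and suppose that, as s → 1⁺, both Σ_p (a_p − b_p) p^{−s} = O(1) and Σ_p (a_p − b_p)² p^{−s} − 2 Σ_p p^{−s} = O(1). Then liminf_{s→1⁺} (Σ_{p : a_p < b_p} p^{−s}) / (Σ_p p^{−s}) ≥ 1/16; that is, the set {p : a_p < b_p} has analytic density at least 1/16. -/
import Mathlib

open Filter Topology Asymptotics

lemma pw_summable {s : ℝ} (hs : 1 < s) :
    Summable (fun p : Nat.Primes => ((p : ℕ) : ℝ) ^ (-s)) :=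
  Nat.Primes.summable_rpow.mpr (by linarith)

lemma pw_pos {s : ℝ} (p : Nat.Primes) : 0 < ((p : ℕ) : ℝ) ^ (-s) :=
  Real.rpow_pos_of_pos (by exact_mod_cast p.prop.pos) _

lemma F_tendsto :
    Tendsto (fun s : ℝ => ∑' p : Nat.Primes, ((p : ℕ) : ℝ) ^ (-s)) (𝓝[>] (1:ℝ)) atTop := by
  rw [tendsto_atTop]
  intro M
  -- find a finite set of primes with large sum of reciprocals
  have hns := Nat.Primes.not_summable_one_div
  have : ∃ F : Finset Nat.Primes, M + 1 ≤ ∑ p ∈ F, (1 / (p : ℝ)) := by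
    by_contra h
    push_neg at h
    exact hns (summable_of_sum_le (fun p => by positivity) fun u => (h u).le)
  obtain ⟨F, hF⟩ := this
  have hcont : Continuous (fun s : ℝ => ∑ p ∈ F, ((p : ℕ) : ℝ) ^ (-s)) := by
    refine continuous_finset_sum F fun p _ => ?_
    have hpos : (0:ℝ) < ((p : ℕ) : ℝ) := by exact_mod_cast p.prop.pos
    exact continuous_const.rpow continuous_neg fun x => Or.inl (ne_of_gt hpos)
  have hval : ∑ p ∈ F, ((p : ℕ) : ℝ) ^ (-(1:ℝ)) = ∑ p ∈ F, (1 / (p : ℝ)) := by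
    refine Finset.sum_congr rfl fun p _ => ?_
    rw [Real.rpow_neg_one]
    simp
  have hev : ∀ᶠ s in 𝓝 (1:ℝ), M < ∑ p ∈ F, ((p : ℕ) : ℝ) ^ (-s) := by
    refine (hcont.tendsto 1).eventually (eventually_gt_nhds ?_)
    rw [hval]; linarith
  filter_upwards [nhdsWithin_le_nhds hev, self_mem_nhdsWithin] with s hs hs1
  refine le_trans hs.le ?_
  exact Summable.sum_le_tsum F (fun p _ => (pw_pos p).le) (pw_summable hs1)

/-- If `|a p - b p| ≤ 4` for all primes `p`, and as `s → 1⁺` both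
`Σ_p (a_p - b_p) p^{-s} = O(1)` and `Σ_p (a_p - b_p)² p^{-s} - 2 Σ_p p^{-s} = O(1)`,
then the set `{p : a_p < b_p}` has analytic density at least `1/16`. -/
theorem statement0 (a b : Nat.Primes → ℝ)
    (hab : ∀ p : Nat.Primes, |a p - b p| ≤ 4)
    (h1 : (fun s : ℝ => ∑' p : Nat.Primes, (a p - b p) * ((p : ℕ) : ℝ) ^ (-s))
      =O[𝓝[>] (1 : ℝ)] (fun _ => (1 : ℝ)))
    (h2 : (fun s : ℝ => (∑' p : Nat.Primes, (a p - b p) ^ 2 * ((p : ℕ) : ℝ) ^ (-s))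
        - 2 * ∑' p : Nat.Primes, ((p : ℕ) : ℝ) ^ (-s))
      =O[𝓝[>] (1 : ℝ)] (fun _ => (1 : ℝ))) :
    (1 : ℝ) / 16 ≤ liminf (fun s : ℝ =>
      (∑' p : {p : Nat.Primes // a p < b p}, ((p.1 : ℕ) : ℝ) ^ (-s)) /
        ∑' p : Nat.Primes, ((p : ℕ) : ℝ) ^ (-s)) (𝓝[>] (1 : ℝ)) := by
  set c : Nat.Primes → ℝ := fun p => a p - b p with hc
  set A : Set Nat.Primes := {p | a p < b p} with hA
  set F : ℝ → ℝ := fun s => ∑' p : Nat.Primes, ((p : ℕ) : ℝ) ^ (-s) with hF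
  set G : ℝ → ℝ := fun s => ∑' p : {p : Nat.Primes // a p < b p}, ((p.1 : ℕ) : ℝ) ^ (-s) with hG
  have habs : ∀ p, -4 ≤ c p ∧ c p ≤ 4 := fun p => abs_le.mp (hab p)
  -- basic facts for s > 1
  have hFpos : ∀ s : ℝ, 1 < s → 0 < F s := by
    intro s hs
    exact Summable.tsum_pos (pw_summable hs) (fun p => (pw_pos p).le) ⟨2, Nat.prime_two⟩ (pw_pos _)
  have hsum1 : ∀ s : ℝ, 1 < s →
      Summable (fun p : Nat.Primes => c p * ((p : ℕ) : ℝ) ^ (-s)) := by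
    intro s hs
    refine Summable.of_abs (((pw_summable hs).mul_left 4).of_nonneg_of_le
      (fun p => abs_nonneg _) fun p => ?_)
    rw [abs_mul, abs_of_pos (pw_pos p)]
    exact mul_le_mul_of_nonneg_right (hab p) (pw_pos p).le
  have hsum2 : ∀ s : ℝ, 1 < s →
      Summable (fun p : Nat.Primes => (c p) ^ 2 * ((p : ℕ) : ℝ) ^ (-s)) := by
    intro s hs
    refine ((pw_summable hs).mul_left 16).of_nonneg_of_le
      (fun p => by positivity) fun p => ?_
    have h := habs p
    have : (c p) ^ 2 ≤ 16 := by nlinarith [h.1, h.2]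
    exact mul_le_mul_of_nonneg_right this (pw_pos p).le
  have hsumInd : ∀ s : ℝ, 1 < s →
      Summable (A.indicator (fun p : Nat.Primes => 32 * ((p : ℕ) : ℝ) ^ (-s))) := by
    intro s hs
    exact ((pw_summable hs).mul_left 32).indicator A
  have hGF : ∀ s : ℝ, 1 < s → G s ≤ F s ∧ 0 ≤ G s := by
    intro s hs
    have h1' : G s = ∑' p : Nat.Primes, A.indicator (fun p => ((p : ℕ) : ℝ) ^ (-s)) p :=
      tsum_subtype A (fun p : Nat.Primes => ((p : ℕ) : ℝ) ^ (-s))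
    constructor
    · rw [h1']
      refine Summable.tsum_le_tsum (fun p => Set.indicator_le_self' (fun p _ => (pw_pos p).le) p)
        ((pw_summable hs).indicator A) (pw_summable hs)
    · rw [h1']
      exact tsum_nonneg fun p => Set.indicator_nonneg (fun p _ => (pw_pos p).le) p
  -- key inequality
  have key : ∀ s : ℝ, 1 < s →
      (∑' p : Nat.Primes, (c p) ^ 2 * ((p : ℕ) : ℝ) ^ (-s))
        - 4 * (∑' p : Nat.Primes, c p * ((p : ℕ) : ℝ) ^ (-s)) ≤ 32 * G s := by
    intro s hs
    have e1 : (∑' p : Nat.Primes, (c p) ^ 2 * ((p : ℕ) : ℝ) ^ (-s))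
        - 4 * (∑' p : Nat.Primes, c p * ((p : ℕ) : ℝ) ^ (-s))
        = ∑' p : Nat.Primes, ((c p) ^ 2 * ((p : ℕ) : ℝ) ^ (-s)
            - 4 * (c p * ((p : ℕ) : ℝ) ^ (-s))) := by
      rw [← tsum_mul_left, ← Summable.tsum_sub (hsum2 s hs) ((hsum1 s hs).mul_left 4)]
    have e2 : 32 * G s = ∑' p : Nat.Primes,
        A.indicator (fun p : Nat.Primes => 32 * ((p : ℕ) : ℝ) ^ (-s)) p := by
      rw [← tsum_subtype A (fun p : Nat.Primes => 32 * ((p : ℕ) : ℝ) ^ (-s)), hG,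
        ← tsum_mul_left]
      rfl
    rw [e1, e2]
    refine Summable.tsum_le_tsum (fun p => ?_) ((hsum2 s hs).sub ((hsum1 s hs).mul_left 4))
      (hsumInd s hs)
    have hp := habs p
    have hpw := pw_pos (s := s) p
    by_cases hmem : p ∈ A
    · rw [Set.indicator_of_mem hmem]
      have hb : c p ^ 2 - 4 * c p ≤ 32 := by nlinarith [hp.1, hp.2]
      have := mul_le_mul_of_nonneg_right hb hpw.le
      nlinarith [this]
    · rw [Set.indicator_of_notMem hmem]
      have hc0 : 0 ≤ c p := by
        simp only [hA, Set.mem_setOf_eq, not_lt] at hmem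
        simp [hc]; linarith
      have hb : c p ^ 2 - 4 * c p ≤ 0 := by nlinarith [hp.2, hc0]
      have := mul_le_mul_of_nonneg_right hb hpw.le
      nlinarith [this]
  -- bounds from h1, h2
  obtain ⟨C1, hC1⟩ := h1.bound
  obtain ⟨C2, hC2⟩ := h2.bound
  simp only [norm_one, mul_one, Real.norm_eq_abs] at hC1 hC2
  set K : ℝ := |C2| + 4 * |C1| with hK
  have hK0 : 0 ≤ K := by positivity
  refine le_of_forall_pos_le_add ?_
  intro ε hε
  have hco : IsCoboundedUnder (· ≥ ·) (𝓝[>] (1:ℝ)) (fun s => G s / F s) := by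
    refine IsBoundedUnder.isCoboundedUnder_ge ?_
    refine ⟨1, eventually_map.mpr ?_⟩
    filter_upwards [self_mem_nhdsWithin] with s hs
    have h := hGF s hs
    exact div_le_one_of_le₀ h.1 (hFpos s hs).le
  have hev : ∀ᶠ s in 𝓝[>] (1:ℝ), 1/16 - ε ≤ G s / F s := by
    have hFbig : ∀ᶠ s in 𝓝[>] (1:ℝ), K / (32 * ε) ≤ F s :=
      F_tendsto.eventually_ge_atTop _
    filter_upwards [self_mem_nhdsWithin, hFbig, hC1, hC2] with s hs hFb hb1 hb2
    have hFp := hFpos s hs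
    have hkey := key s hs
    have hKF : K ≤ 32 * ε * F s := by
      rw [div_le_iff₀ (by positivity)] at hFb
      linarith [hFb]
    have h32 : 2 * F s - K ≤ 32 * G s := by
      have habs1 : |∑' p : Nat.Primes, c p * ((p : ℕ) : ℝ) ^ (-s)| ≤ |C1| :=
        le_trans hb1 (le_abs_self C1)
      have habs2 : |(∑' p : Nat.Primes, (c p) ^ 2 * ((p : ℕ) : ℝ) ^ (-s)) - 2 * F s| ≤ |C2| :=
        le_trans hb2 (le_abs_self C2)
      rw [abs_le] at habs1 habs2
      linarith [habs1.1, habs1.2, habs2.1, habs2.2, hkey]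
    rw [le_div_iff₀ hFp]
    nlinarith [h32, hKF, hFp]
  have := le_liminf_of_le hco hev
  linarith [this]
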